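/- Lower bound on the Gram operator of an approximate eigenspace: let A be symmetric PSD with A ⪰ VΛ_kVᵀ where V has orthonormal columns and Λ_k ⪰ λ_k I with λ_k > 0. If G̃ is an n×k matrix with cos²θ(V, G̃) ≥ c² and λ_k(G̃ᵀG̃) ≥ μ > 0, then for every w ∈ ℝ^k, wᵀ G̃ᵀ A G̃ w ≥ λ_k c² μ ‖w‖², i.e. λ_min(G̃ᵀAG̃) ≥ λ_k c² μ. -/

import Mathlib

open Matrix

lemma quad_form_eq {n k : ℕ} (M : Matrix (Fin n) (Fin n) ℝ)
    (B : Matrix (Fin n) (Fin k) ℝ) (w : Fin k → ℝ) :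
    w ⬝ᵥ (Bᵀ * M * B).mulVec w = (B.mulVec w) ⬝ᵥ M.mulVec (B.mulVec w) := by
  rw [Matrix.mul_assoc, ← Matrix.mulVec_mulVec, Matrix.dotProduct_mulVec,
    Matrix.vecMul_transpose, ← Matrix.mulVec_mulVec]

/-- Lower bound on the Gram operator of an approximate eigenspace: if `A ⪰ VΛ_kVᵀ` with
`V` orthonormal and `Λ_k ⪰ λ_k I`, `λ_k > 0`, `cos²θ(V, G̃) ≥ c²` and
`λ_min(G̃ᵀG̃) ≥ μ > 0`, then `wᵀ G̃ᵀ A G̃ w ≥ λ_k c² μ ‖w‖²` for every `w`. -/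
theorem gram_operator_lower_bound {n k : ℕ}
    (A : Matrix (Fin n) (Fin n) ℝ) (V Gt : Matrix (Fin n) (Fin k) ℝ)
    (d : Fin k → ℝ) (lk c2 μ : ℝ)
    (hA : A.PosSemidef)
    (hV : Vᵀ * V = 1)
    (hdom : (A - V * Matrix.diagonal d * Vᵀ).PosSemidef)
    (hd : ∀ i, lk ≤ d i) (hlk : 0 < lk)
    (hGt : ∀ w : Fin k → ℝ, Gt.mulVec w = 0 → w = 0)
    (hcos : ∀ w : Fin k → ℝ, w ≠ 0 →
      c2 ≤ (∑ i, ((Vᵀ * Gt).mulVec w i) ^ 2) / (∑ i, (Gt.mulVec w i) ^ 2))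
    (hμ : 0 < μ)
    (hgram : ((Gtᵀ * Gt) - μ • (1 : Matrix (Fin k) (Fin k) ℝ)).PosSemidef) :
    ∀ w : Fin k → ℝ, lk * c2 * μ * (∑ i, (w i) ^ 2) ≤
      w ⬝ᵥ (Gtᵀ * A * Gt).mulVec w := by
  intro w
  set g : Fin n → ℝ := Gt.mulVec w with hg
  set u : Fin k → ℝ := Vᵀ.mulVec g with hu
  have key : w ⬝ᵥ (Gtᵀ * A * Gt).mulVec w = g ⬝ᵥ A.mulVec g := quad_form_eq A Gt w
  have hAg : 0 ≤ g ⬝ᵥ A.mulVec g := by simpa using hA.dotProduct_mulVec_nonneg g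
  by_cases hw : w = 0
  · subst hw
    rw [key]
    simpa using hAg
  have hgne : g ≠ 0 := fun h => hw (hGt w h)
  have hS1pos : 0 < ∑ i, (g i) ^ 2 := by
    rcases Function.ne_iff.mp hgne with ⟨i, hi⟩
    exact Finset.sum_pos' (fun j _ => sq_nonneg _)
      ⟨i, Finset.mem_univ i, sq_pos_of_ne_zero hi⟩
  have hwpos : 0 < ∑ i, (w i) ^ 2 := by
    rcases Function.ne_iff.mp hw with ⟨i, hi⟩
    exact Finset.sum_pos' (fun j _ => sq_nonneg _)
      ⟨i, Finset.mem_univ i, sq_pos_of_ne_zero hi⟩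
  by_cases hc : c2 ≤ 0
  · have h1 : lk * c2 * μ ≤ 0 := by nlinarith [mul_pos hlk hμ]
    calc lk * c2 * μ * (∑ i, (w i) ^ 2) ≤ 0 :=
          mul_nonpos_of_nonpos_of_nonneg h1 hwpos.le
      _ ≤ w ⬝ᵥ (Gtᵀ * A * Gt).mulVec w := key ▸ hAg
  push_neg at hc
  -- cosine bound
  have hVG : (Vᵀ * Gt).mulVec w = u := by rw [← Matrix.mulVec_mulVec, hu, hg]
  have hcos' := hcos w hw
  rw [hVG, ← hg] at hcos'
  have hS2 : c2 * (∑ i, (g i) ^ 2) ≤ ∑ i, (u i) ^ 2 := (le_div_iff₀ hS1pos).mp hcos'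
  -- gram bound : μ * ∑ w² ≤ ∑ g²
  have hgram' : μ * (∑ i, (w i) ^ 2) ≤ ∑ i, (g i) ^ 2 := by
    have h0 := hgram.dotProduct_mulVec_nonneg w
    simp only [star_trivial] at h0
    rw [Matrix.sub_mulVec, dotProduct_sub, ← Matrix.mulVec_mulVec,
      Matrix.dotProduct_mulVec, Matrix.vecMul_transpose] at h0
    have e1 : g ⬝ᵥ g = ∑ i, (g i) ^ 2 := by simp [dotProduct, sq]
    have e2 : w ⬝ᵥ (μ • (1 : Matrix (Fin k) (Fin k) ℝ)).mulVec w
        = μ * ∑ i, (w i) ^ 2 := by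
      simp [Matrix.smul_mulVec, Matrix.one_mulVec, dotProduct, sq,
        Finset.mul_sum, mul_comm, mul_left_comm]
    rw [hg] at e1
    rw [e1, e2] at h0
    linarith
  -- eigenvalue bound
  have hdom' : u ⬝ᵥ (Matrix.diagonal d).mulVec u ≤ g ⬝ᵥ A.mulVec g := by
    have h0 := hdom.dotProduct_mulVec_nonneg g
    simp only [star_trivial] at h0
    rw [Matrix.sub_mulVec, dotProduct_sub, sub_nonneg] at h0
    have e : g ⬝ᵥ (V * Matrix.diagonal d * Vᵀ).mulVec g
        = u ⬝ᵥ (Matrix.diagonal d).mulVec u := by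
      have := quad_form_eq (Matrix.diagonal d) Vᵀ g
      simpa [hu] using this
    rw [e] at h0
    exact h0
  have hDu : lk * (∑ i, (u i) ^ 2) ≤ u ⬝ᵥ (Matrix.diagonal d).mulVec u := by
    rw [Finset.mul_sum]
    simp only [dotProduct, Matrix.mulVec_diagonal]
    refine Finset.sum_le_sum fun i _ => ?_
    have h1 : lk * (u i) ^ 2 ≤ d i * (u i) ^ 2 :=
      mul_le_mul_of_nonneg_right (hd i) (sq_nonneg _)
    nlinarith [h1]
  -- chain
  rw [key]
  have c1 : lk * c2 * (μ * (∑ i, (w i) ^ 2)) ≤ lk * c2 * (∑ i, (g i) ^ 2) :=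
    mul_le_mul_of_nonneg_left hgram' (mul_pos hlk hc).le
  have c2' : lk * (c2 * (∑ i, (g i) ^ 2)) ≤ lk * (∑ i, (u i) ^ 2) :=
    mul_le_mul_of_nonneg_left hS2 hlk.le
  nlinarith [c1, c2', hDu, hdom']
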